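/- arXiv:2408.13047 — 2 statements merged into one kernel-verified Lean document; each statement's English description precedes it below -/
import Mathlib

section
/- Let S ∈ ℝ^{J×J} and H ∈ ℝ^{J×J} be symmetric positive definite. Then 1_Jᵀ S^{-1} 1_J − (1_Jᵀ H 1_J)² / (1_Jᵀ H S H 1_J) = ‖(I − P) S^{-1/2} 1_J‖², where P = S^{1/2} H 1_J (1_Jᵀ H S H 1_J)^{-1} 1_Jᵀ H S^{1/2}; in particular this difference is nonnegative. -/
open Matrix

namespace Matrix.PosSemidef
open scoped ComplexOrder
noncomputable def sqrt {n : Type*} [Fintype n] [DecidableEq n] {𝕜 : Type*} [RCLike 𝕜]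
    {A : Matrix n n 𝕜} (hA : PosSemidef A) : Matrix n n 𝕜 :=
  hA.1.eigenvectorUnitary.1 * diagonal ((↑) ∘ (√·) ∘ hA.1.eigenvalues) *
  (star hA.1.eigenvectorUnitary : Matrix n n 𝕜)
end Matrix.PosSemidef

lemma sqrt_transpose_eq (J : ℕ) {S : Matrix (Fin J) (Fin J) ℝ} (hS : S.PosSemidef) :
    (hS.sqrt)ᵀ = hS.sqrt := by
  rw [← conjTranspose_eq_transpose_of_trivial]
  simp only [Matrix.PosSemidef.sqrt, conjTranspose_mul, star_eq_conjTranspose,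
    conjTranspose_conjTranspose, diagonal_conjTranspose, Matrix.mul_assoc]
  congr 3

lemma sqrt_mul_self_eq (J : ℕ) {S : Matrix (Fin J) (Fin J) ℝ} (hS : S.PosSemidef) :
    hS.sqrt * hS.sqrt = S := by
  have hU := Unitary.coe_star_mul_self hS.1.eigenvectorUnitary
  have hd : diagonal ((RCLike.ofReal : ℝ → ℝ) ∘ (√·) ∘ hS.1.eigenvalues) *
      diagonal ((RCLike.ofReal : ℝ → ℝ) ∘ (√·) ∘ hS.1.eigenvalues)
      = diagonal ((RCLike.ofReal : ℝ → ℝ) ∘ hS.1.eigenvalues) := by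
    rw [diagonal_mul_diagonal]
    congr 1; funext i
    simp [Real.mul_self_sqrt (hS.eigenvalues_nonneg i)]
  have hspec := hS.1.spectral_theorem
  rw [Unitary.conjStarAlgAut_apply] at hspec
  simp only [Matrix.PosSemidef.sqrt]
  simp only [Matrix.mul_assoc]
  rw [← Matrix.mul_assoc (star (hS.1.eigenvectorUnitary : Matrix (Fin J) (Fin J) ℝ))
    (hS.1.eigenvectorUnitary : Matrix (Fin J) (Fin J) ℝ), hU,
    Matrix.one_mul, ← Matrix.mul_assoc (diagonal _) (diagonal _), hd, ← Matrix.mul_assoc]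
  exact hspec.symm

lemma mulVec_dot (J : ℕ) (A : Matrix (Fin J) (Fin J) ℝ) (x y : Fin J → ℝ) :
    (A.mulVec x) ⬝ᵥ y = x ⬝ᵥ (Aᵀ.mulVec y) := by
  rw [dotProduct_mulVec, vecMul_transpose, dotProduct_comm]

lemma vecMulVec_mulVec' (J : ℕ) (u v : Fin J → ℝ) :
    (Matrix.vecMulVec u u).mulVec v = (u ⬝ᵥ v) • u := by
  funext i
  simp [vecMulVec_apply, Matrix.mulVec, dotProduct, Finset.mul_sum, Finset.sum_mul,
    mul_comm, mul_left_comm]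

/-- Efficiency identity: `1ᵀS⁻¹1 − (1ᵀH1)²/(1ᵀHSH1)` equals the squared norm of
`(I − P) S^{-1/2} 1` where `P` projects onto the span of `S^{1/2}H1`; in
particular it is nonnegative. -/
theorem stmt_9 (J : ℕ) (hJ : 0 < J) (S H : Matrix (Fin J) (Fin J) ℝ)
    (hS : S.PosDef) (hH : H.PosDef)
    (ones : Fin J → ℝ) (hones : ones = fun _ => 1)
    (Rt : Matrix (Fin J) (Fin J) ℝ) (hRt : Rt = hS.posSemidef.sqrt)
    (c : ℝ) (hc : c = ones ⬝ᵥ (H * S * H).mulVec ones)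
    (u : Fin J → ℝ) (hu : u = (Rt * H).mulVec ones)
    (P : Matrix (Fin J) (Fin J) ℝ) (hP : P = c⁻¹ • Matrix.vecMulVec u u)
    (wv : Fin J → ℝ)
    (hwv : wv = ((1 : Matrix (Fin J) (Fin J) ℝ) - P).mulVec (Rt⁻¹.mulVec ones)) :
    ones ⬝ᵥ S⁻¹.mulVec ones - (ones ⬝ᵥ H.mulVec ones) ^ 2 / c = wv ⬝ᵥ wv ∧
      0 ≤ ones ⬝ᵥ S⁻¹.mulVec ones - (ones ⬝ᵥ H.mulVec ones) ^ 2 / c := by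
  have hones_ne : ones ≠ 0 := by
    rw [hones]
    intro h
    have := congrFun h ⟨0, hJ⟩
    simp at this
  -- Rt facts
  have hRtH : Rtᵀ = Rt := by
    rw [hRt]
    exact sqrt_transpose_eq J hS.posSemidef
  have hRtRt : Rt * Rt = S := by
    rw [hRt]; exact sqrt_mul_self_eq J hS.posSemidef
  have hRtdet : IsUnit Rt.det := by
    have : Rt.det * Rt.det = S.det := by rw [← det_mul, hRtRt]
    have hSdet' : S.det ≠ 0 := hS.det_pos.ne'
    refine isUnit_iff_ne_zero.mpr fun h => hSdet' ?_
    rw [← this, h, mul_zero]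
  have hRtinv : Rt * Rt⁻¹ = 1 := mul_nonsing_inv Rt hRtdet
  have hHH : Hᵀ = H := hH.isHermitian.eq
  -- c positive
  have hHdet : IsUnit H.det := isUnit_iff_ne_zero.mpr hH.det_pos.ne'
  have hy : H.mulVec ones ≠ 0 := fun h => hones_ne <| by
    have := congrArg (H⁻¹.mulVec ·) h
    simpa [Matrix.mulVec_mulVec, Matrix.nonsing_inv_mul H hHdet, Matrix.one_mulVec] using this
  have hcpos : 0 < c := by
    have : c = (H.mulVec ones) ⬝ᵥ S.mulVec (H.mulVec ones) := by
      rw [hc, ← Matrix.mulVec_mulVec, ← Matrix.mulVec_mulVec, mulVec_dot, hHH,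
        dotProduct_comm, mulVec_dot]
    rw [this]
    have := hS.dotProduct_mulVec_pos hy
    simpa using this
  set v : Fin J → ℝ := Rt⁻¹.mulVec ones with hv
  -- key dot products
  have huv : u ⬝ᵥ v = ones ⬝ᵥ H.mulVec ones := by
    rw [hu, mulVec_dot, hv, Matrix.mulVec_mulVec, transpose_mul, hRtH, hHH,
      Matrix.mul_assoc, hRtinv, Matrix.mul_one]
  have huu : u ⬝ᵥ u = c := by
    rw [hu, mulVec_dot, Matrix.mulVec_mulVec, transpose_mul, hRtH, hHH, hc]
    congr 2
    rw [Matrix.mul_assoc, ← Matrix.mul_assoc Rt Rt H, hRtRt, ← Matrix.mul_assoc]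
  have hvv : v ⬝ᵥ v = ones ⬝ᵥ S⁻¹.mulVec ones := by
    rw [hv, mulVec_dot, Matrix.mulVec_mulVec, transpose_nonsing_inv, hRtH,
      ← Matrix.mul_inv_rev, hRtRt]
  -- wv
  have hwv' : wv = v - (c⁻¹ * (u ⬝ᵥ v)) • u := by
    rw [hwv, Matrix.sub_mulVec, Matrix.one_mulVec, hP, Matrix.smul_mulVec,
      vecMulVec_mulVec', smul_smul]
  have hvu : v ⬝ᵥ u = ones ⬝ᵥ H.mulVec ones := by rw [dotProduct_comm]; exact huv
  have key : wv ⬝ᵥ wv = ones ⬝ᵥ S⁻¹.mulVec ones - (ones ⬝ᵥ H.mulVec ones) ^ 2 / c := by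
    rw [hwv']
    simp only [sub_dotProduct, dotProduct_sub, smul_dotProduct,
      dotProduct_smul, smul_eq_mul, huu, huv, hvu, hvv]
    field_simp
    ring
  have hnn : 0 ≤ wv ⬝ᵥ wv := Finset.sum_nonneg fun i _ => mul_self_nonneg (wv i)
  exact ⟨key.symm, key ▸ hnn⟩
end

section
/- For every λ ∈ (0,1) and σ² > 0, the 3×3 symmetric matrix Q_B(λ) = σ²·[[1/(λ(1−λ)), 1/λ, 1/λ], [1/λ, 1/λ, (2−λ)/(2λ)], [1/λ, (2−λ)/(2λ), 2(3−2λ)/λ]] is positive definite. -/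
/-- For every `λ ∈ (0,1)` and `σ² > 0`, the matrix `Q_B(λ)` is positive definite. -/
theorem stmt_15 (l σ2 : ℝ) (hl : 0 < l) (hl1 : l < 1) (hσ : 0 < σ2) :
    (σ2 • !![1/(l*(1-l)), 1/l, 1/l;
             1/l, 1/l, (2-l)/(2*l);
             1/l, (2-l)/(2*l), 2*(3-2*l)/l] :
      Matrix (Fin 3) (Fin 3) ℝ).PosDef := by
  have h1 : 0 < 1 - l := by linarith
  rw [Matrix.posDef_iff_dotProduct_mulVec]
  constructor
  · rw [Matrix.IsHermitian]
    ext i j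
    fin_cases i <;> fin_cases j <;>
      simp [Matrix.conjTranspose_apply, Matrix.vecHead, Matrix.vecTail]
  · intro x hx
    simp [dotProduct, Matrix.mulVec, Fin.sum_univ_three,
      Matrix.vecHead, Matrix.vecTail, Function.comp]
    have hP : 0 < (x 0 + (1-l)*(x 1 + x 2))^2 + l*(1-l)*(x 1 + x 2/2)^2
        + (1-l)*(5 - 13*l/4)*(x 2)^2 := by
      by_cases hc : x 2 = 0
      · by_cases hb : x 1 = 0
        · have ha : x 0 ≠ 0 := by
            intro ha
            apply hx
            funext i
            fin_cases i <;> simpa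
          have := pow_pos (abs_pos.mpr ha) 2
          rw [sq_abs] at this
          rw [hb, hc]
          nlinarith [this]
        · have hb2 : 0 < (x 1)^2 := by positivity
          rw [hc]
          nlinarith [sq_nonneg (x 0 + (1-l)*(x 1)), mul_pos hl h1]
      · have hc2 : 0 < (x 2)^2 := by positivity
        nlinarith [sq_nonneg (x 0 + (1-l)*(x 1 + x 2)), sq_nonneg (x 1 + x 2/2),
          mul_pos hl h1, mul_pos h1 (show (0:ℝ) < 5 - 13*l/4 by linarith)]
    have hpos : 0 < σ2/(l*(1-l)) * ((x 0 + (1-l)*(x 1 + x 2))^2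
        + l*(1-l)*(x 1 + x 2/2)^2 + (1-l)*(5 - 13*l/4)*(x 2)^2) :=
      mul_pos (div_pos hσ (mul_pos hl h1)) hP
    convert hpos using 1
    · rfl
    field_simp
    ring
end
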